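/- (Recovery of the fully connected graph-state stabilizer conditions) Let N ≥ 2, 3 ≤ k ≤ N, let A_0^{(i)}, A_1^{(i)} be binary observables on ℂ^{d_i} (i = 1,…,k−1), M_v binary observables on ℂ^{d_D} (v ∈ {0,1}^{N−k+1}), and let ψ be a unit vector with ⟨ψ, Ŝ_N^+ ψ⟩ = 2^{N−1}√2. Fix any v ∈ {0,1}^{N−k} and define: Z_1 = −(A_0^{(1)}+A_1^{(1)})/√2, X_1 = (A_0^{(1)}−A_1^{(1)})/√2; Z_i = A_0^{(i)}, X_i = A_1^{(i)} for i = 2,…,k−1; and, with ω = w(v): if ω is even, Z_k = (−1)^{ω(ω+1)/2} M_{(0,v)} and X_k = −(−1)^{(ω+1)(ω+2)/2} M_{(1,v)}; if ω is odd, X_k = −(−1)^{ω(ω+1)/2} M_{(0,v)} and Z_k = (−1)^{(ω+1)(ω+2)/2} M_{(1,v)}. Then for every i = 1,…,k the stabilizing condition (X_i ⊗ ⊗_{j≠i} Z_j) ψ = ψ holds, where the operators act on their respective tensor factors. -/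

import Mathlib

open Matrix

noncomputable section

/-- Hamming weight of a bit string. -/
def wt {n : ℕ} (x : Fin n → Fin 2) : ℕ := ∑ i, (x i : ℕ)

/-- The Svetlichny sign `(-1)^{w(x)(w(x)+1)/2}`. -/
def sgn {n : ℕ} (x : Fin n → Fin 2) : ℂ := (-1) ^ (wt x * (wt x + 1) / 2)

/-- The joint Hilbert-space index of `t+2` honest parties (local dimensions `d i`) and the
grouped dishonest parties (dimension `dD`). -/
abbrev FullIdx (t : ℕ) (d : Fin (t + 2) → ℕ) (dD : ℕ) :=
  ((i : Fin (t + 2)) → Fin (d i)) × Fin dD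

/-- The tensor-product observable
`A^{(1)}_{x_1} ⊗ ⋯ ⊗ A^{(k-1)}_{x_{k-1}} ⊗ M_{(x_k,…,x_N)}`, written entrywise.
Here the `k - 1 = t + 2` honest parties have binary observables `A i b`, and the grouped
dishonest parties have joint binary observables `M v` for `v ∈ {0,1}^{N-k+1}`, `N-k+1 = s+1`. -/
def bigOp {t s : ℕ} {d : Fin (t + 2) → ℕ} {dD : ℕ}
    (A : (i : Fin (t + 2)) → Fin 2 → Matrix (Fin (d i)) (Fin (d i)) ℂ)
    (M : (Fin (s + 1) → Fin 2) → Matrix (Fin dD) (Fin dD) ℂ)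
    (x : Fin (t + 2 + (s + 1)) → Fin 2) :
    Matrix (FullIdx t d dD) (FullIdx t d dD) ℂ :=
  Matrix.of fun p q =>
    (∏ i, A i (x (Fin.castAdd (s + 1) i)) (p.1 i) (q.1 i)) *
      M (fun j => x (Fin.natAdd (t + 2) j)) p.2 q.2

/-- The Svetlichny–Bell operator `Ŝ_N^+` with a grouped dishonest set
(`N = (t+2) + (s+1)`). -/
def svetOp {t s : ℕ} {d : Fin (t + 2) → ℕ} {dD : ℕ}
    (A : (i : Fin (t + 2)) → Fin 2 → Matrix (Fin (d i)) (Fin (d i)) ℂ)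
    (M : (Fin (s + 1) → Fin 2) → Matrix (Fin dD) (Fin dD) ℂ) :
    Matrix (FullIdx t d dD) (FullIdx t d dD) ℂ :=
  ∑ x : Fin (t + 2 + (s + 1)) → Fin 2, sgn x • bigOp A M x

/-- The `Z` observable of honest party `i`: `Z_1 = -(A_0^{(1)}+A_1^{(1)})/√2` and
`Z_i = A_0^{(i)}` for `i = 2,…,k-1`. -/
def Zop {t : ℕ} {d : Fin (t + 2) → ℕ}
    (A : (i : Fin (t + 2)) → Fin 2 → Matrix (Fin (d i)) (Fin (d i)) ℂ)
    (i : Fin (t + 2)) : Matrix (Fin (d i)) (Fin (d i)) ℂ :=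
  Fin.cases (-(((Real.sqrt 2 : ℂ))⁻¹ • (A 0 0 + A 0 1))) (fun j => A j.succ 0) i

/-- The `X` observable of honest party `i`: `X_1 = (A_0^{(1)}-A_1^{(1)})/√2` and
`X_i = A_1^{(i)}` for `i = 2,…,k-1`. -/
def Xop {t : ℕ} {d : Fin (t + 2) → ℕ}
    (A : (i : Fin (t + 2)) → Fin 2 → Matrix (Fin (d i)) (Fin (d i)) ℂ)
    (i : Fin (t + 2)) : Matrix (Fin (d i)) (Fin (d i)) ℂ :=
  Fin.cases (((Real.sqrt 2 : ℂ))⁻¹ • (A 0 0 - A 0 1)) (fun j => A j.succ 1) i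

/-- The `Z` observable of the grouped dishonest parties, for a fixed tail `v ∈ {0,1}^{N-k}`:
`Z_k = (-1)^{ω(ω+1)/2} M_{(0,v)}` if `ω = w(v)` is even, and
`Z_k = (-1)^{(ω+1)(ω+2)/2} M_{(1,v)}` if `ω` is odd. -/
def ZopD {s : ℕ} {dD : ℕ}
    (M : (Fin (s + 1) → Fin 2) → Matrix (Fin dD) (Fin dD) ℂ)
    (v : Fin s → Fin 2) : Matrix (Fin dD) (Fin dD) ℂ :=
  if Even (wt v) then
    ((-1 : ℂ) ^ (wt v * (wt v + 1) / 2)) • M (Fin.cons 0 v)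
  else
    ((-1 : ℂ) ^ ((wt v + 1) * (wt v + 2) / 2)) • M (Fin.cons 1 v)

/-- The `X` observable of the grouped dishonest parties, for a fixed tail `v ∈ {0,1}^{N-k}`:
`X_k = -(-1)^{(ω+1)(ω+2)/2} M_{(1,v)}` if `ω = w(v)` is even, and
`X_k = -(-1)^{ω(ω+1)/2} M_{(0,v)}` if `ω` is odd. -/
def XopD {s : ℕ} {dD : ℕ}
    (M : (Fin (s + 1) → Fin 2) → Matrix (Fin dD) (Fin dD) ℂ)
    (v : Fin s → Fin 2) : Matrix (Fin dD) (Fin dD) ℂ :=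
  if Even (wt v) then
    (-((-1 : ℂ) ^ ((wt v + 1) * (wt v + 2) / 2))) • M (Fin.cons 1 v)
  else
    (-((-1 : ℂ) ^ (wt v * (wt v + 1) / 2))) • M (Fin.cons 0 v)

/-- The stabilizer generator `Ŝ_i = X_i ⊗ ⨂_{j ≠ i} Z_j` of the fully connected graph state
on the `k = t + 3` sites (the `t + 2` honest parties and the grouped dishonest parties),
written entrywise. -/
def stabOp {t s : ℕ} {d : Fin (t + 2) → ℕ} {dD : ℕ}
    (A : (i : Fin (t + 2)) → Fin 2 → Matrix (Fin (d i)) (Fin (d i)) ℂ)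
    (M : (Fin (s + 1) → Fin 2) → Matrix (Fin dD) (Fin dD) ℂ)
    (v : Fin s → Fin 2) (i : Fin (t + 3)) :
    Matrix (FullIdx t d dD) (FullIdx t d dD) ℂ :=
  Matrix.of fun p q =>
    (∏ j : Fin (t + 2),
      (if (j : ℕ) = (i : ℕ) then Xop A j else Zop A j) (p.1 j) (q.1 j)) *
      (if (i : ℕ) = t + 2 then XopD M v else ZopD M v) p.2 q.2



namespace S11

/-- triangle number -/
def tri (n : ℕ) : ℕ := n * (n + 1) / 2

lemma tri_two_mul (n : ℕ) : tri n * 2 = n * (n + 1) :=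
  Nat.div_mul_cancel (Nat.even_mul_succ_self n).two_dvd

lemma tri_add (m n : ℕ) : tri (m + n) = tri m + tri n + m * n := by
  apply Nat.eq_of_mul_eq_mul_right (show 0 < 2 by norm_num)
  rw [tri_two_mul]
  conv_rhs => rw [add_mul, add_mul, tri_two_mul, tri_two_mul]
  ring

lemma tri_one : tri 1 = 1 := rfl
lemma tri_succ (n : ℕ) : tri (n + 1) = tri n + (n + 1) := by
  rw [tri_add, tri_one]; ring

lemma npow_par {a b : ℕ} (h : a % 2 = b % 2) : ((-1:ℂ))^a = (-1)^b := by
  conv_lhs => rw [← Nat.div_add_mod a 2]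
  conv_rhs => rw [← Nat.div_add_mod b 2]
  rw [pow_add, pow_add, pow_mul, pow_mul, h]
  norm_num

lemma npow_sq (n : ℕ) : ((-1:ℂ))^n * (-1)^n = 1 := by
  rw [← pow_add]
  rw [npow_par (b := 0) (by omega)]; rfl

variable {t s : ℕ} {d : Fin (t + 2) → ℕ} {dD : ℕ}

/-- entrywise tensor product -/
def tprod (C : (i : Fin (t + 2)) → Matrix (Fin (d i)) (Fin (d i)) ℂ)
    (D : Matrix (Fin dD) (Fin dD) ℂ) :
    Matrix (FullIdx t d dD) (FullIdx t d dD) ℂ :=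
  Matrix.of fun p q => (∏ i, C i (p.1 i) (q.1 i)) * D p.2 q.2

lemma tprod_mul (C C' : (i : Fin (t + 2)) → Matrix (Fin (d i)) (Fin (d i)) ℂ)
    (D D' : Matrix (Fin dD) (Fin dD) ℂ) :
    tprod C D * tprod C' D' = tprod (fun i => C i * C' i) (D * D') := by
  ext ⟨p1, p2⟩ ⟨q1, q2⟩
  simp only [tprod, Matrix.mul_apply, Matrix.of_apply]
  rw [Fintype.sum_prod_type]
  have step1 : ∀ r1 : (i : Fin (t+2)) → Fin (d i),
      (∑ r2, (∏ i, C i (p1 i) (r1 i)) * D p2 r2 * ((∏ i, C' i (r1 i) (q1 i)) * D' r2 q2))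
      = ((∏ i, C i (p1 i) (r1 i)) * (∏ i, C' i (r1 i) (q1 i))) * ∑ r2, D p2 r2 * D' r2 q2 := by
    intro r1
    rw [Finset.mul_sum]
    exact Finset.sum_congr rfl (fun r2 _ => by ring)
  simp only [step1]
  rw [← Finset.sum_mul]
  congr 1
  have : ∀ r1 : (i : Fin (t+2)) → Fin (d i),
      (∏ i, C i (p1 i) (r1 i)) * (∏ i, C' i (r1 i) (q1 i))
      = ∏ i, (C i (p1 i) (r1 i) * C' i (r1 i) (q1 i)) := by
    intro r1; rw [Finset.prod_mul_distrib]
  simp only [this, Matrix.mul_apply]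
  rw [Finset.prod_univ_sum]
  rw [Fintype.piFinset_univ]

lemma tprod_smul_right (C : (i : Fin (t + 2)) → Matrix (Fin (d i)) (Fin (d i)) ℂ)
    (c : ℂ) (D : Matrix (Fin dD) (Fin dD) ℂ) :
    tprod C (c • D) = c • tprod C D := by
  ext ⟨p1, p2⟩ ⟨q1, q2⟩
  simp only [tprod, Matrix.of_apply, Matrix.smul_apply, smul_eq_mul]
  ring

lemma tprod_one : (tprod (fun i => (1 : Matrix (Fin (d i)) (Fin (d i)) ℂ))
    (1 : Matrix (Fin dD) (Fin dD) ℂ)) = 1 := by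
  ext ⟨p1, p2⟩ ⟨q1, q2⟩
  simp only [tprod, Matrix.of_apply, Matrix.one_apply, Prod.mk.injEq]
  by_cases h1 : p1 = q1
  · subst h1
    simp only [if_pos rfl, Finset.prod_const_one, true_and, one_mul]
    by_cases h2 : p2 = q2 <;> simp [h2]
  · obtain ⟨i, hi⟩ : ∃ i, p1 i ≠ q1 i := by
      by_contra h; push_neg at h; exact h1 (funext h)
    rw [Finset.prod_eq_zero (Finset.mem_univ i) (by simp [hi])]
    simp [h1]

lemma tprod_conjT (C : (i : Fin (t + 2)) → Matrix (Fin (d i)) (Fin (d i)) ℂ)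
    (D : Matrix (Fin dD) (Fin dD) ℂ) :
    (tprod C D)ᴴ = tprod (fun i => (C i)ᴴ) Dᴴ := by
  ext ⟨p1, p2⟩ ⟨q1, q2⟩
  simp only [tprod, Matrix.conjTranspose_apply, Matrix.of_apply, ← starRingEnd_apply]
  rw [_root_.map_mul, map_prod]

lemma tprod_cases_add (P P' : Matrix (Fin (d 0)) (Fin (d 0)) ℂ)
    (Q : (j : Fin (t+1)) → Matrix (Fin (d j.succ)) (Fin (d j.succ)) ℂ)
    (D : Matrix (Fin dD) (Fin dD) ℂ) :
    tprod (Fin.cases (P + P') Q) D = tprod (Fin.cases P Q) D + tprod (Fin.cases P' Q) D := by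
  ext ⟨p1, p2⟩ ⟨q1, q2⟩
  simp only [tprod, Matrix.of_apply, Matrix.add_apply, Fin.prod_univ_succ, Fin.cases_zero,
    Fin.cases_succ]
  ring

lemma tprod_cases_smul (c : ℂ) (P : Matrix (Fin (d 0)) (Fin (d 0)) ℂ)
    (Q : (j : Fin (t+1)) → Matrix (Fin (d j.succ)) (Fin (d j.succ)) ℂ)
    (D : Matrix (Fin dD) (Fin dD) ℂ) :
    tprod (Fin.cases (c • P) Q) D = c • tprod (Fin.cases P Q) D := by
  ext ⟨p1, p2⟩ ⟨q1, q2⟩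
  simp only [tprod, Matrix.of_apply, Matrix.smul_apply, Fin.prod_univ_succ, Fin.cases_zero,
    Fin.cases_succ, smul_eq_mul]
  ring


variable (A : (i : Fin (t + 2)) → Fin 2 → Matrix (Fin (d i)) (Fin (d i)) ℂ)
variable (M : (Fin (s + 1) → Fin 2) → Matrix (Fin dD) (Fin dD) ℂ)

/-- first-site operator -/
def PW (w : ℕ) : Matrix (Fin (d 0)) (Fin (d 0)) ℂ :=
  (Real.sqrt 2 : ℂ)⁻¹ • (((-1:ℂ)^(tri w)) • A 0 0 + ((-1:ℂ)^(tri (w+1))) • A 0 1)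

def Kop : Matrix (FullIdx t d dD) (FullIdx t d dD) ℂ :=
  tprod (Fin.cases (A 0 0 * A 0 1 + A 0 1 * A 0 0) (fun _ => 1)) 1

def Nop (v : Fin s → Fin 2) (b : Fin 2) : Matrix (Fin dD) (Fin dD) ℂ :=
  if b = 0 then ZopD M v else XopD M v

def genOp (v : Fin s → Fin 2) (u : Fin (t+1) → Fin 2) (b : Fin 2) :
    Matrix (FullIdx t d dD) (FullIdx t d dD) ℂ :=
  tprod (Fin.cases (PW A (wt u + (b:ℕ))) (fun j => A j.succ (u j))) (Nop M v b)

lemma sqrt2_sq : (Real.sqrt 2 : ℂ) * (Real.sqrt 2 : ℂ) = 2 := by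
  norm_cast
  rw [Real.mul_self_sqrt (by norm_num)]

lemma hr2 : ((Real.sqrt 2 : ℂ))⁻¹ * ((Real.sqrt 2 : ℂ))⁻¹ = (2:ℂ)⁻¹ := by
  rw [← mul_inv, sqrt2_sq]

lemma PW_sq (hA0 : A 0 0 * A 0 0 = 1) (hA1 : A 0 1 * A 0 1 = 1) (w : ℕ) :
    PW A w * PW A w
      = 1 + (((-1:ℂ)^(w+1)) * (2:ℂ)⁻¹) • (A 0 0 * A 0 1 + A 0 1 * A 0 0) := by
  have hαβ : ((-1:ℂ))^(tri w) * (-1)^(tri (w+1)) = (-1)^(w+1) := by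
    rw [← pow_add, tri_succ]
    exact npow_par (by omega)
  have hβα : ((-1:ℂ))^(tri (w+1)) * (-1)^(tri w) = (-1)^(w+1) := by
    rw [mul_comm]; exact hαβ
  have hsq := npow_sq (tri w)
  have hsq' := npow_sq (tri (w+1))
  unfold PW
  rw [smul_mul_smul_comm, hr2, mul_add, add_mul, add_mul]
  rw [smul_mul_smul_comm, smul_mul_smul_comm, smul_mul_smul_comm, smul_mul_smul_comm]
  rw [hsq, hsq', hαβ, hβα, hA0, hA1]
  module

lemma PW_herm (hA : ∀ b, (A 0 b).IsHermitian) (w : ℕ) : (PW A w)ᴴ = PW A w := by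
  simp [PW, conjTranspose_smul, conjTranspose_add, star_pow, star_neg, star_one,
    star_inv₀, Complex.star_def, Complex.conj_ofReal, (hA 0).eq, (hA 1).eq]

lemma ZopD_herm (hM : ∀ w, (M w).IsHermitian) (v : Fin s → Fin 2) :
    (ZopD M v)ᴴ = ZopD M v := by
  unfold ZopD
  split <;>
  simp [conjTranspose_smul, star_pow, star_neg, star_one, (hM _).eq]

lemma XopD_herm (hM : ∀ w, (M w).IsHermitian) (v : Fin s → Fin 2) :
    (XopD M v)ᴴ = XopD M v := by
  unfold XopD
  split <;>
  simp [conjTranspose_smul, star_pow, star_neg, star_one, (hM _).eq]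

lemma Nop_herm (hM : ∀ w, (M w).IsHermitian) (v : Fin s → Fin 2) (b : Fin 2) :
    (Nop M v b)ᴴ = Nop M v b := by
  unfold Nop
  split
  · exact ZopD_herm M hM v
  · exact XopD_herm M hM v

lemma smul_sq_one {n : ℕ} (c : ℂ) (hc : c * c = 1) (X : Matrix (Fin n) (Fin n) ℂ)
    (hX : X * X = 1) : (c • X) * (c • X) = 1 := by
  rw [smul_mul_smul_comm, hc, hX, one_smul]

lemma neg_npow_sq (n : ℕ) : (-((-1:ℂ))^n) * (-((-1:ℂ))^n) = 1 := by
  rw [neg_mul_neg]; exact npow_sq n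

lemma ZopD_sq (hMsq : ∀ w, M w * M w = 1) (v : Fin s → Fin 2) :
    ZopD M v * ZopD M v = 1 := by
  unfold ZopD
  split
  · exact smul_sq_one _ (npow_sq _) _ (hMsq _)
  · exact smul_sq_one _ (npow_sq _) _ (hMsq _)

lemma XopD_sq (hMsq : ∀ w, M w * M w = 1) (v : Fin s → Fin 2) :
    XopD M v * XopD M v = 1 := by
  unfold XopD
  split
  · exact smul_sq_one _ (neg_npow_sq _) _ (hMsq _)
  · exact smul_sq_one _ (neg_npow_sq _) _ (hMsq _)

lemma Nop_sq (hMsq : ∀ w, M w * M w = 1) (v : Fin s → Fin 2) (b : Fin 2) :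
    Nop M v b * Nop M v b = 1 := by
  unfold Nop
  split
  · exact ZopD_sq M hMsq v
  · exact XopD_sq M hMsq v

lemma genOp_herm (hAherm : ∀ i b, (A i b).IsHermitian) (hMherm : ∀ w, (M w).IsHermitian)
    (v : Fin s → Fin 2) (u : Fin (t+1) → Fin 2) (b : Fin 2) :
    (genOp A M v u b)ᴴ = genOp A M v u b := by
  unfold genOp
  rw [tprod_conjT, Nop_herm M hMherm]
  have hfam : (fun i => (Fin.cases (motive := fun i => Matrix (Fin (d i)) (Fin (d i)) ℂ)
        (PW A (wt u + (b:ℕ))) (fun j => A j.succ (u j)) i)ᴴ)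
      = Fin.cases (PW A (wt u + (b:ℕ))) (fun j => A j.succ (u j)) := by
    funext i
    refine Fin.cases ?_ ?_ i
    · simp only [Fin.cases_zero]
      exact PW_herm A (fun b => hAherm 0 b) _
    · intro j
      simp only [Fin.cases_succ]
      exact (hAherm j.succ (u j)).eq
  rw [hfam]

lemma genOp_sq (hAsq : ∀ i b, A i b * A i b = 1) (hMsq : ∀ w, M w * M w = 1)
    (v : Fin s → Fin 2) (u : Fin (t+1) → Fin 2) (b : Fin 2) :
    genOp A M v u b * genOp A M v u b
      = 1 + (((-1:ℂ)^(wt u + (b:ℕ) + 1)) * (2:ℂ)⁻¹) • Kop A := by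
  unfold genOp
  rw [tprod_mul, Nop_sq M hMsq]
  have hfam : (fun i => Fin.cases (motive := fun i => Matrix (Fin (d i)) (Fin (d i)) ℂ)
        (PW A (wt u + (b:ℕ))) (fun j => A j.succ (u j)) i *
        Fin.cases (motive := fun i => Matrix (Fin (d i)) (Fin (d i)) ℂ)
        (PW A (wt u + (b:ℕ))) (fun j => A j.succ (u j)) i)
      = Fin.cases (PW A (wt u + (b:ℕ)) * PW A (wt u + (b:ℕ))) (fun j => (1 : Matrix (Fin (d j.succ)) (Fin (d j.succ)) ℂ)) := by
    funext i
    refine Fin.cases ?_ ?_ i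
    · simp
    · intro j; simp [hAsq]
  rw [hfam, PW_sq A (hAsq 0 0) (hAsq 0 1)]
  rw [tprod_cases_add, tprod_cases_smul]
  have h1 : (Fin.cases (motive := fun i => Matrix (Fin (d i)) (Fin (d i)) ℂ) 1
      (fun j => (1 : Matrix (Fin (d j.succ)) (Fin (d j.succ)) ℂ)))
      = fun i => (1 : Matrix (Fin (d i)) (Fin (d i)) ℂ) := by
    funext i; refine Fin.cases ?_ ?_ i <;> simp
  rw [h1, tprod_one]
  rfl

lemma sum_genOp_sq (hAsq : ∀ i b, A i b * A i b = 1) (hMsq : ∀ w, M w * M w = 1) :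
    (∑ z : (Fin s → Fin 2) × (Fin (t+1) → Fin 2) × Fin 2,
        genOp A M z.1 z.2.1 z.2.2 * genOp A M z.1 z.2.1 z.2.2)
      = ((2:ℂ)^(t+s+2)) • (1 : Matrix (FullIdx t d dD) (FullIdx t d dD) ℂ) := by
  have hu : ∀ (v : Fin s → Fin 2) (u : Fin (t+1) → Fin 2),
      (∑ b : Fin 2, genOp A M v u b * genOp A M v u b)
        = (2:ℂ) • (1 : Matrix (FullIdx t d dD) (FullIdx t d dD) ℂ) := by
    intro v u
    simp only [genOp_sq A M hAsq hMsq]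
    rw [Fin.sum_univ_two]
    simp only [Fin.val_zero, Fin.val_one, add_zero]
    have e2 : ((-1:ℂ))^(wt u + 1 + 1) = -((-1:ℂ))^(wt u + 0 + 1) := by
      rw [show wt u + 1 + 1 = (wt u + 0 + 1) + 1 by ring, pow_succ]
      ring
    rw [e2]
    module
  have hub : ∀ v : Fin s → Fin 2,
      (∑ y : (Fin (t+1) → Fin 2) × Fin 2, genOp A M v y.1 y.2 * genOp A M v y.1 y.2)
        = ((2:ℂ)^(t+2)) • (1 : Matrix (FullIdx t d dD) (FullIdx t d dD) ℂ) := by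
    intro v
    rw [Fintype.sum_prod_type]
    simp only [hu]
    rw [Finset.sum_const, Finset.card_univ]
    have hc : Fintype.card (Fin (t+1) → Fin 2) = 2^(t+1) := by
      simp [Fintype.card_fun]
    rw [hc, ← Nat.cast_smul_eq_nsmul ℂ, smul_smul]
    congr 1
    push_cast
    ring
  rw [Fintype.sum_prod_type]
  simp only [hub]
  rw [Finset.sum_const, Finset.card_univ]
  have hc : Fintype.card (Fin s → Fin 2) = 2^s := by
    simp [Fintype.card_fun]
  rw [hc, ← Nat.cast_smul_eq_nsmul ℂ, smul_smul]
  congr 1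
  push_cast
  rw [← pow_add]
  congr 1
  omega

/-- assembling a full bit string from the pieces -/
def asm (a : Fin 2) (u : Fin (t+1) → Fin 2) (b : Fin 2) (v : Fin s → Fin 2) :
    Fin (t + 2 + (s + 1)) → Fin 2 :=
  Fin.append (Fin.cons a u) (Fin.cons b v)

def asmE (t s : ℕ) : ((Fin s → Fin 2) × (Fin (t+1) → Fin 2) × Fin 2 × Fin 2)
    ≃ (Fin (t + 2 + (s + 1)) → Fin 2) where
  toFun z := asm z.2.2.2 z.2.1 z.2.2.1 z.1
  invFun x := (fun j => x (Fin.natAdd (t+2) j.succ), fun j => x (Fin.castAdd (s+1) j.succ),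
    x (Fin.natAdd (t+2) 0), x (Fin.castAdd (s+1) 0))
  left_inv z := by
    obtain ⟨v, u, b, a⟩ := z
    refine Prod.ext ?_ (Prod.ext ?_ (Prod.ext ?_ ?_))
    · funext j
      simp [asm, Fin.append_right]
    · funext j
      simp [asm, Fin.append_left]
    · simp [asm, Fin.append_right]
    · simp [asm, Fin.append_left]
  right_inv x := by
    funext i
    refine Fin.addCases (fun i => ?_) (fun i => ?_) i
    · refine Fin.cases ?_ (fun j => ?_) i <;> simp [asm, Fin.append_left]
    · refine Fin.cases ?_ (fun j => ?_) i <;> simp [asm, Fin.append_right]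

lemma wt_asm (a : Fin 2) (u : Fin (t+1) → Fin 2) (b : Fin 2) (v : Fin s → Fin 2) :
    wt (asm a u b v) = (a:ℕ) + wt u + (b:ℕ) + wt v := by
  have wt_cons : ∀ (n : ℕ) (a : Fin 2) (u : Fin n → Fin 2),
      (∑ i : Fin (n+1), ((Fin.cons (α := fun _ => Fin 2) a u i) : ℕ)) = (a:ℕ) + ∑ i, ((u i : Fin 2) : ℕ) := by
    intro n a u
    rw [Fin.sum_univ_succ]
    simp
  unfold wt asm
  rw [Fin.sum_univ_add]
  simp only [Fin.append_left, Fin.append_right]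
  rw [wt_cons, wt_cons]
  ring

lemma bigOp_asm (a : Fin 2) (u : Fin (t+1) → Fin 2) (b : Fin 2) (v : Fin s → Fin 2) :
    bigOp A M (asm a u b v)
      = tprod (Fin.cases (A 0 a) (fun j => A j.succ (u j))) (M (Fin.cons b v)) := by
  have hM : (fun j => asm a u b v (Fin.natAdd (t+2) j)) = Fin.cons b v :=
    funext fun j => Fin.append_right _ _ j
  ext ⟨p1, p2⟩ ⟨q1, q2⟩
  show (∏ i, A i (asm a u b v (Fin.castAdd (s+1) i)) (p1 i) (q1 i)) *
      M (fun j => asm a u b v (Fin.natAdd (t+2) j)) p2 q2 = _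
  rw [hM]
  unfold tprod
  simp only [Matrix.of_apply]
  congr 1
  refine Finset.prod_congr rfl (fun i _ => ?_)
  refine Fin.cases ?_ (fun j => ?_) i <;>
    simp [asm, Fin.append_left]

lemma sgn_tri {n : ℕ} (x : Fin n → Fin 2) : sgn x = ((-1:ℂ))^(tri (wt x)) := rfl

lemma sc_mul (p q n : ℕ) (h : (tri p + q) % 2 = tri n % 2) :
    ((-1:ℂ))^(tri p) * ((-1:ℂ))^q = (-1)^(tri n) := by
  rw [← pow_add]; exact npow_par h

lemma sc_e0 (m ω n : ℕ) (hω : ω % 2 = 0) (hn : n = m + ω) :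
    ((-1:ℂ))^(tri m) * ((-1:ℂ))^(tri ω) = (-1)^(tri n) := by
  refine sc_mul _ _ _ ?_
  subst hn
  have h2 := tri_add m ω
  have h1 : m * ω % 2 = 0 := by rw [Nat.mul_mod, hω]; omega
  omega

lemma sc_e1 (m ω n : ℕ) (hω : ω % 2 = 0) (hn : n = m + ω) :
    ((-1:ℂ))^(tri m) * (-((-1:ℂ))^(tri (ω+1))) = (-1)^(tri n) := by
  rw [show (-((-1:ℂ))^(tri (ω+1))) = ((-1:ℂ))^(tri (ω+1) + 1) from by rw [pow_succ]; ring]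
  refine sc_mul _ _ _ ?_
  subst hn
  have h2 := tri_add m ω
  have h3 := tri_succ ω
  have h1 : m * ω % 2 = 0 := by rw [Nat.mul_mod, hω]; omega
  omega

lemma sc_o0 (m ω n : ℕ) (hω : ω % 2 = 1) (hn : n = m + ω + 1) :
    ((-1:ℂ))^(tri m) * ((-1:ℂ))^(tri (ω+1)) = (-1)^(tri n) := by
  refine sc_mul _ _ _ ?_
  subst hn
  have h4 : tri (m + ω + 1) = tri (m + (ω + 1)) := by rw [Nat.add_assoc]
  have h2 := tri_add m (ω + 1)
  have h1 : m * (ω + 1) % 2 = 0 := by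
    rw [Nat.mul_mod, show (ω + 1) % 2 = 0 by omega]; omega
  omega

lemma sc_o1 (m ω n : ℕ) (hω : ω % 2 = 1) (hn : n = m + ω) :
    ((-1:ℂ))^(tri (m+1)) * (-((-1:ℂ))^(tri ω)) = (-1)^(tri n) := by
  rw [show (-((-1:ℂ))^(tri ω)) = ((-1:ℂ))^(tri ω + 1) from by rw [pow_succ]; ring]
  refine sc_mul _ _ _ ?_
  subst hn
  have h2 := tri_add m ω
  have h3 := tri_succ m
  have h1 : m * ω % 2 = m % 2 := by rw [Nat.mul_mod, hω]; omega
  omega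

lemma sqrt2_ne : (Real.sqrt 2 : ℂ) ≠ 0 := by
  simp only [ne_eq, Complex.ofReal_eq_zero]
  positivity

lemma sqrt2_smul_genOp (v : Fin s → Fin 2) (u : Fin (t+1) → Fin 2) (b : Fin 2) :
    (Real.sqrt 2 : ℂ) • genOp A M v u b
      = ∑ a : Fin 2, ((-1:ℂ))^(tri (wt u + (b:ℕ) + (a:ℕ))) •
          tprod (Fin.cases (A 0 a) (fun j => A j.succ (u j))) (Nop M v b) := by
  unfold genOp PW
  rw [tprod_cases_smul, tprod_cases_add, tprod_cases_smul, tprod_cases_smul]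
  rw [smul_smul, mul_inv_cancel₀ sqrt2_ne, one_smul]
  rw [Fin.sum_univ_two]
  simp only [Fin.val_zero, Fin.val_one, add_zero]

lemma sum_genOp :
    (Real.sqrt 2 : ℂ) • (∑ z : (Fin s → Fin 2) × (Fin (t+1) → Fin 2) × Fin 2,
        genOp A M z.1 z.2.1 z.2.2) = svetOp A M := by
  have LHS1 : (Real.sqrt 2 : ℂ) • (∑ z : (Fin s → Fin 2) × (Fin (t+1) → Fin 2) × Fin 2,
        genOp A M z.1 z.2.1 z.2.2)
      = ∑ v : Fin s → Fin 2, ∑ u : Fin (t+1) → Fin 2, ∑ b : Fin 2,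
          ∑ a : Fin 2, ((-1:ℂ))^(tri (wt u + (b:ℕ) + (a:ℕ))) •
          tprod (Fin.cases (A 0 a) (fun j => A j.succ (u j))) (Nop M v b) := by
    rw [Finset.smul_sum, Fintype.sum_prod_type]
    refine Finset.sum_congr rfl fun v _ => ?_
    rw [Fintype.sum_prod_type]
    refine Finset.sum_congr rfl fun u _ => ?_
    refine Finset.sum_congr rfl fun b _ => ?_
    exact sqrt2_smul_genOp A M v u b
  have RHS1 : svetOp A M = ∑ v : Fin s → Fin 2, ∑ u : Fin (t+1) → Fin 2, ∑ b : Fin 2,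
      ∑ a : Fin 2, sgn (asm a u b v) • bigOp A M (asm a u b v) := by
    rw [show svetOp A M = ∑ x : Fin (t+2+(s+1)) → Fin 2, sgn x • bigOp A M x from rfl]
    rw [← Equiv.sum_comp (asmE t s) (fun x => sgn x • bigOp A M x)]
    rw [Fintype.sum_prod_type]
    refine Finset.sum_congr rfl fun v _ => ?_
    rw [Fintype.sum_prod_type]
    refine Finset.sum_congr rfl fun u _ => ?_
    rw [Fintype.sum_prod_type]
    exact Finset.sum_congr rfl fun b _ => Finset.sum_congr rfl fun a _ => rfl
  rw [LHS1, RHS1]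
  refine Finset.sum_congr rfl fun v _ => Finset.sum_congr rfl fun u _ => ?_
  have htri0 : wt v * (wt v + 1) / 2 = tri (wt v) := rfl
  have htri1 : (wt v + 1) * (wt v + 2) / 2 = tri (wt v + 1) := by
    unfold tri
    rw [show (wt v + 1) + 1 = wt v + 2 from by omega]
  have hN0e (hω : Even (wt v)) : Nop M v 0
      = ((-1:ℂ))^(tri (wt v)) • M (Fin.cons 0 v) := by
    unfold Nop ZopD
    rw [if_pos rfl, if_pos hω, htri0]
  have hN1e (hω : Even (wt v)) : Nop M v 1
      = (-((-1:ℂ))^(tri (wt v + 1))) • M (Fin.cons 1 v) := by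
    unfold Nop XopD
    rw [if_neg (by decide), if_pos hω, htri1]
  have hN0o (hω : ¬ Even (wt v)) : Nop M v 0
      = ((-1:ℂ))^(tri (wt v + 1)) • M (Fin.cons 1 v) := by
    unfold Nop ZopD
    rw [if_pos rfl, if_neg hω, htri1]
  have hN1o (hω : ¬ Even (wt v)) : Nop M v 1
      = (-((-1:ℂ))^(tri (wt v))) • M (Fin.cons 0 v) := by
    unfold Nop XopD
    rw [if_neg (by decide), if_neg hω, htri0]
  rcases Nat.even_or_odd (wt v) with hω | hω
  · have hω2 : wt v % 2 = 0 := Nat.even_iff.mp hω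
    refine Finset.sum_congr rfl fun b _ => Finset.sum_congr rfl fun a _ => ?_
    rcases (show b = 0 ∨ b = 1 by omega) with hb | hb <;> subst hb <;>
      rcases (show a = 0 ∨ a = 1 by omega) with ha | ha <;> subst ha
    · rw [hN0e hω, tprod_smul_right, smul_smul, ← bigOp_asm, sgn_tri, wt_asm]
      simp only [Fin.val_zero, add_zero, zero_add]
      congr 1
      exact sc_e0 _ _ _ hω2 (by omega)
    · rw [hN0e hω, tprod_smul_right, smul_smul, ← bigOp_asm, sgn_tri, wt_asm]
      simp only [Fin.val_zero, Fin.val_one, add_zero, zero_add]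
      congr 1
      exact sc_e0 _ _ _ hω2 (by omega)
    · rw [hN1e hω, tprod_smul_right, smul_smul, ← bigOp_asm, sgn_tri, wt_asm]
      simp only [Fin.val_zero, Fin.val_one, add_zero, zero_add]
      congr 1
      exact sc_e1 _ _ _ hω2 (by omega)
    · rw [hN1e hω, tprod_smul_right, smul_smul, ← bigOp_asm, sgn_tri, wt_asm]
      simp only [Fin.val_zero, Fin.val_one, add_zero, zero_add]
      congr 1
      exact sc_e1 _ _ _ hω2 (by omega)
  · have hω2 : wt v % 2 = 1 := Nat.odd_iff.mp hω
    have hωe : ¬ Even (wt v) := by rw [Nat.even_iff]; omega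
    simp only [Fin.sum_univ_two]
    have h00 : ((-1:ℂ))^(tri (wt u + ((0:Fin 2):ℕ) + ((0:Fin 2):ℕ))) •
          tprod (Fin.cases (A 0 0) (fun j => A j.succ (u j))) (Nop M v 0)
        = sgn (asm 0 u 1 v) • bigOp A M (asm 0 u 1 v) := by
      rw [hN0o hωe, tprod_smul_right, smul_smul, ← bigOp_asm, sgn_tri, wt_asm]
      simp only [Fin.val_zero, Fin.val_one, add_zero, zero_add]
      congr 1
      exact sc_o0 _ _ _ hω2 (by omega)
    have h01 : ((-1:ℂ))^(tri (wt u + ((0:Fin 2):ℕ) + ((1:Fin 2):ℕ))) •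
          tprod (Fin.cases (A 0 1) (fun j => A j.succ (u j))) (Nop M v 0)
        = sgn (asm 1 u 1 v) • bigOp A M (asm 1 u 1 v) := by
      rw [hN0o hωe, tprod_smul_right, smul_smul, ← bigOp_asm, sgn_tri, wt_asm]
      simp only [Fin.val_zero, Fin.val_one, add_zero, zero_add]
      congr 1
      exact sc_o0 _ _ _ hω2 (by omega)
    have h10 : ((-1:ℂ))^(tri (wt u + ((1:Fin 2):ℕ) + ((0:Fin 2):ℕ))) •
          tprod (Fin.cases (A 0 0) (fun j => A j.succ (u j))) (Nop M v 1)
        = sgn (asm 0 u 0 v) • bigOp A M (asm 0 u 0 v) := by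
      rw [hN1o hωe, tprod_smul_right, smul_smul, ← bigOp_asm, sgn_tri, wt_asm]
      simp only [Fin.val_zero, Fin.val_one, add_zero, zero_add]
      congr 1
      exact sc_o1 _ _ _ hω2 (by omega)
    have h11 : ((-1:ℂ))^(tri (wt u + ((1:Fin 2):ℕ) + ((1:Fin 2):ℕ))) •
          tprod (Fin.cases (A 0 1) (fun j => A j.succ (u j))) (Nop M v 1)
        = sgn (asm 1 u 0 v) • bigOp A M (asm 1 u 0 v) := by
      rw [hN1o hωe, tprod_smul_right, smul_smul, ← bigOp_asm, sgn_tri, wt_asm]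
      simp only [Fin.val_zero, Fin.val_one, add_zero, zero_add]
      congr 1
      exact sc_o1 _ _ _ hω2 (by omega)
    rw [h00, h01, h10, h11]
    abel

lemma master
    (hAherm : ∀ i b, (A i b).IsHermitian) (hAsq : ∀ i b, A i b * A i b = 1)
    (hMherm : ∀ w, (M w).IsHermitian) (hMsq : ∀ w, M w * M w = 1)
    (ψ : FullIdx t d dD → ℂ) (hψ : (∑ p, ‖ψ p‖ ^ 2) = 1)
    (hmax : ∑ p, (starRingEnd ℂ) (ψ p) * (svetOp A M).mulVec ψ p =
      ((2 ^ (t + s + 2) * Real.sqrt 2 : ℝ) : ℂ)) :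
    ∀ (v : Fin s → Fin 2) (u : Fin (t+1) → Fin 2) (b : Fin 2),
      (genOp A M v u b).mulVec ψ = ψ := by
  have hip1 : star ψ ⬝ᵥ ψ = 1 := by
    have h1 : ∀ p, star ψ p * ψ p = ((‖ψ p‖^2 : ℝ) : ℂ) := by
      intro p
      rw [Pi.star_apply, Complex.star_def, mul_comm, Complex.mul_conj]
      norm_cast
      rw [Complex.normSq_eq_norm_sq]
    rw [dotProduct]
    rw [Finset.sum_congr rfl fun p _ => h1 p]
    push_cast
    exact_mod_cast congrArg (fun x : ℝ => (x : ℂ)) hψ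
  have herr : ∀ T : Matrix (FullIdx t d dD) (FullIdx t d dD) ℂ, Tᴴ = T →
      (((∑ p, Complex.normSq ((T *ᵥ ψ - ψ) p)) : ℝ) : ℂ)
        = star ψ ⬝ᵥ ((T * T) *ᵥ ψ) - 2 * (star ψ ⬝ᵥ (T *ᵥ ψ)) + 1 := by
    intro T hT
    have h1 : (((∑ p, Complex.normSq ((T *ᵥ ψ - ψ) p)) : ℝ) : ℂ)
        = star (T *ᵥ ψ - ψ) ⬝ᵥ (T *ᵥ ψ - ψ) := by
      rw [dotProduct]
      push_cast
      refine Finset.sum_congr rfl fun p _ => ?_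
      rw [Pi.star_apply, Complex.star_def, mul_comm, Complex.mul_conj]
    rw [h1, star_sub, sub_dotProduct, dotProduct_sub, dotProduct_sub, star_mulVec]
    have e1 : (star ψ ᵥ* Tᴴ) ⬝ᵥ (T *ᵥ ψ) = star ψ ⬝ᵥ ((T * T) *ᵥ ψ) := by
      rw [dotProduct_mulVec, vecMul_vecMul, hT, ← dotProduct_mulVec]
    have e2 : (star ψ ᵥ* Tᴴ) ⬝ᵥ ψ = star ψ ⬝ᵥ (T *ᵥ ψ) := by
      rw [← dotProduct_mulVec, hT]
    rw [e1, e2, hip1]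
    ring
  have hmv : ∀ F : ((Fin s → Fin 2) × (Fin (t+1) → Fin 2) × Fin 2) →
      Matrix (FullIdx t d dD) (FullIdx t d dD) ℂ,
      (∑ z, F z) *ᵥ ψ = ∑ z, F z *ᵥ ψ := by
    intro F
    funext p
    rw [Finset.sum_apply]
    show ∑ q, (∑ z, F z) p q * ψ q = _
    simp only [Matrix.sum_apply, Finset.sum_mul]
    rw [Finset.sum_comm]
    rfl
  have hdp : ∀ w : ((Fin s → Fin 2) × (Fin (t+1) → Fin 2) × Fin 2) → (FullIdx t d dD → ℂ),
      star ψ ⬝ᵥ (∑ z, w z) = ∑ z, star ψ ⬝ᵥ w z := by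
    intro w
    simp only [dotProduct, Finset.sum_apply, Finset.mul_sum]
    exact Finset.sum_comm
  have hcard : (Fintype.card ((Fin s → Fin 2) × (Fin (t+1) → Fin 2) × Fin 2) : ℂ)
      = (2:ℂ)^(t+s+2) := by
    simp only [Fintype.card_prod, Fintype.card_fun, Fintype.card_fin]
    push_cast
    rw [← pow_succ, ← pow_add]
    congr 1
    omega
  have hGh : ∀ z : (Fin s → Fin 2) × (Fin (t+1) → Fin 2) × Fin 2,
      (genOp A M z.1 z.2.1 z.2.2)ᴴ = genOp A M z.1 z.2.1 z.2.2 :=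
    fun z => genOp_herm A M hAherm hMherm z.1 z.2.1 z.2.2
  have hA' : (∑ z : (Fin s → Fin 2) × (Fin (t+1) → Fin 2) × Fin 2,
      star ψ ⬝ᵥ ((genOp A M z.1 z.2.1 z.2.2 * genOp A M z.1 z.2.1 z.2.2) *ᵥ ψ))
      = (2:ℂ)^(t+s+2) := by
    rw [← hdp, ← hmv, sum_genOp_sq A M hAsq hMsq, smul_mulVec, one_mulVec,
      dotProduct_smul, hip1]
    simp
  have hmax' : star ψ ⬝ᵥ (svetOp A M *ᵥ ψ) = (2:ℂ)^(t+s+2) * (Real.sqrt 2 : ℂ) := by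
    have h := hmax
    push_cast at h
    calc star ψ ⬝ᵥ (svetOp A M *ᵥ ψ)
        = ∑ p, (starRingEnd ℂ) (ψ p) * (svetOp A M).mulVec ψ p := by
          refine Finset.sum_congr rfl fun p _ => ?_
          rw [Pi.star_apply, Complex.star_def]
      _ = (2:ℂ)^(t+s+2) * (Real.sqrt 2 : ℂ) := h
  have hB' : (∑ z : (Fin s → Fin 2) × (Fin (t+1) → Fin 2) × Fin 2,
      star ψ ⬝ᵥ (genOp A M z.1 z.2.1 z.2.2 *ᵥ ψ)) = (2:ℂ)^(t+s+2) := by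
    have hS : (∑ z : (Fin s → Fin 2) × (Fin (t+1) → Fin 2) × Fin 2,
        genOp A M z.1 z.2.1 z.2.2) = ((Real.sqrt 2 : ℂ))⁻¹ • svetOp A M := by
      rw [← sum_genOp A M, smul_smul, inv_mul_cancel₀ sqrt2_ne, one_smul]
    rw [← hdp, ← hmv, hS, smul_mulVec, dotProduct_smul, hmax', smul_eq_mul]
    field_simp
  have hsum0 : (∑ z : (Fin s → Fin 2) × (Fin (t+1) → Fin 2) × Fin 2,
      (((∑ p, Complex.normSq ((genOp A M z.1 z.2.1 z.2.2 *ᵥ ψ - ψ) p)) : ℝ) : ℂ)) = 0 := by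
    rw [Finset.sum_congr rfl fun z _ => herr _ (hGh z)]
    rw [Finset.sum_add_distrib, Finset.sum_sub_distrib, hA', ← Finset.mul_sum, hB',
      Finset.sum_const, Finset.card_univ, nsmul_eq_mul, hcard]
    ring
  have hreal : (∑ z : (Fin s → Fin 2) × (Fin (t+1) → Fin 2) × Fin 2,
      (∑ p, Complex.normSq ((genOp A M z.1 z.2.1 z.2.2 *ᵥ ψ - ψ) p))) = 0 := by
    have h2 : ((∑ z : (Fin s → Fin 2) × (Fin (t+1) → Fin 2) × Fin 2,
        (∑ p, Complex.normSq ((genOp A M z.1 z.2.1 z.2.2 *ᵥ ψ - ψ) p)) : ℝ) : ℂ) = 0 := by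
      push_cast
      push_cast at hsum0
      exact hsum0
    exact_mod_cast h2
  intro v u b
  have hz := (Finset.sum_eq_zero_iff_of_nonneg
    (fun z _ => Finset.sum_nonneg fun p _ => Complex.normSq_nonneg _)).mp hreal
    (v, u, b) (Finset.mem_univ _)
  have hp := (Finset.sum_eq_zero_iff_of_nonneg
    (fun p _ => Complex.normSq_nonneg _)).mp hz
  funext p
  have h0 : (genOp A M v u b *ᵥ ψ - ψ) p = 0 :=
    Complex.normSq_eq_zero.mp (hp p (Finset.mem_univ _))
  have := sub_eq_zero.mp (by simpa using h0)
  exact this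

lemma PW_zero_eq_Xop : PW A 0 = Xop A 0 := by
  unfold PW Xop
  rw [Fin.cases_zero, show tri 0 = 0 from rfl, show tri (0+1) = 1 from rfl]
  module

lemma PW_one_eq_Zop : PW A 1 = Zop A 0 := by
  unfold PW Zop
  rw [Fin.cases_zero, show tri 1 = 1 from rfl, show tri (1+1) = 3 from rfl]
  module

lemma wt_zero : wt (fun _ : Fin (t+1) => (0 : Fin 2)) = 0 := by
  simp [wt]

lemma wt_single (l0 : Fin (t+1)) :
    wt (fun l => if l = l0 then (1 : Fin 2) else 0) = 1 := by
  unfold wt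
  have h : ∀ l : Fin (t+1), (((if l = l0 then (1 : Fin 2) else 0) : Fin 2) : ℕ)
      = if l = l0 then 1 else 0 := by
    intro l
    by_cases h : l = l0 <;> simp [h]
  rw [Finset.sum_congr rfl fun l _ => h l, Finset.sum_ite_eq' Finset.univ l0 (fun _ => 1)]
  simp

lemma Zop_succ (l : Fin (t+1)) : Zop A l.succ = A l.succ 0 := by
  simp [Zop]

lemma Xop_succ (l : Fin (t+1)) : Xop A l.succ = A l.succ 1 := by
  simp [Xop]

lemma stab_gen0 (v : Fin s → Fin 2) (i : Fin (t+3)) (hi : (i:ℕ) = 0) :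
    stabOp A M v i = genOp A M v (fun _ => 0) 0 := by
  have hP : PW A (wt (fun _ : Fin (t+1) => (0:Fin 2)) + ((0:Fin 2):ℕ)) = Xop A 0 := by
    rw [wt_zero]
    exact PW_zero_eq_Xop A
  ext ⟨p1, p2⟩ ⟨q1, q2⟩
  simp only [stabOp, genOp, tprod, Matrix.of_apply]
  congr 1
  · refine Finset.prod_congr rfl fun j _ => ?_
    refine Fin.cases ?_ (fun l => ?_) j
    · rw [if_pos (by simp [hi]), Fin.cases_zero, hP]
    · rw [if_neg (by simp [hi]), Fin.cases_succ, Zop_succ]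
  · rw [if_neg (by omega)]
    show ZopD M v p2 q2 = Nop M v 0 p2 q2
    unfold Nop
    rw [if_pos rfl]

lemma stab_genD (v : Fin s → Fin 2) (i : Fin (t+3)) (hi : (i:ℕ) = t+2) :
    stabOp A M v i = genOp A M v (fun _ => 0) 1 := by
  have hP : PW A (wt (fun _ : Fin (t+1) => (0:Fin 2)) + ((1:Fin 2):ℕ)) = Zop A 0 := by
    rw [wt_zero, Fin.val_one, zero_add]
    exact PW_one_eq_Zop A
  ext ⟨p1, p2⟩ ⟨q1, q2⟩
  simp only [stabOp, genOp, tprod, Matrix.of_apply]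
  congr 1
  · refine Finset.prod_congr rfl fun j _ => ?_
    refine Fin.cases ?_ (fun l => ?_) j
    · rw [if_neg (by rw [Fin.val_zero, hi]; omega), Fin.cases_zero, hP]
    · rw [if_neg (by rw [Fin.val_succ, hi]; omega), Fin.cases_succ, Zop_succ]
  · rw [if_pos hi]
    show XopD M v p2 q2 = Nop M v 1 p2 q2
    unfold Nop
    rw [if_neg (by decide)]

lemma stab_genM (v : Fin s → Fin 2) (i : Fin (t+3)) (l0 : Fin (t+1))
    (hl : (l0:ℕ) + 1 = (i:ℕ)) :
    stabOp A M v i = genOp A M v (fun l => if l = l0 then 1 else 0) 0 := by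
  have hP : PW A (wt (fun l : Fin (t+1) => if l = l0 then (1:Fin 2) else 0) + ((0:Fin 2):ℕ))
      = Zop A 0 := by
    rw [wt_single, Fin.val_zero, add_zero]
    exact PW_one_eq_Zop A
  ext ⟨p1, p2⟩ ⟨q1, q2⟩
  simp only [stabOp, genOp, tprod, Matrix.of_apply]
  congr 1
  · refine Finset.prod_congr rfl fun j _ => ?_
    refine Fin.cases ?_ (fun l => ?_) j
    · rw [if_neg (by rw [Fin.val_zero]; omega), Fin.cases_zero, hP]
    · rw [Fin.cases_succ]
      by_cases h : l = l0
      · rw [if_pos (by rw [Fin.val_succ, h, hl]), if_pos h, Xop_succ]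
      · rw [if_neg (by
          rw [Fin.val_succ]
          intro hc
          exact h (Fin.ext (by omega))), if_neg h, Zop_succ]
  · rw [if_neg (by omega)]
    show ZopD M v p2 q2 = Nop M v 0 p2 q2
    unfold Nop
    rw [if_pos rfl]

end S11
/-- Recovery of the fully connected graph-state stabilizer conditions: a unit state maximally
violating the `N`-partite Svetlichny inequality (`N = (t+2)+(s+1)`, with `k - 1 = t + 2`
honest parties, so `3 ≤ k ≤ N`) is stabilized by all `k = t + 3` generators
`X_i ⊗ ⨂_{j ≠ i} Z_j`, for any fixed tail `v ∈ {0,1}^{N-k}`. -/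
theorem stmt_11 (t s : ℕ) (d : Fin (t + 2) → ℕ) (dD : ℕ)
    (A : (i : Fin (t + 2)) → Fin 2 → Matrix (Fin (d i)) (Fin (d i)) ℂ)
    (M : (Fin (s + 1) → Fin 2) → Matrix (Fin dD) (Fin dD) ℂ)
    (hAherm : ∀ i b, (A i b).IsHermitian) (hAsq : ∀ i b, A i b * A i b = 1)
    (hMherm : ∀ w, (M w).IsHermitian) (hMsq : ∀ w, M w * M w = 1)
    (ψ : FullIdx t d dD → ℂ) (hψ : (∑ p, ‖ψ p‖ ^ 2) = 1)
    (hmax : ∑ p, (starRingEnd ℂ) (ψ p) * (svetOp A M).mulVec ψ p =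
      ((2 ^ (t + s + 2) * Real.sqrt 2 : ℝ) : ℂ))
    (v : Fin s → Fin 2) :
    ∀ i : Fin (t + 3), (stabOp A M v i).mulVec ψ = ψ := by
  intro i
  have key := S11.master A M hAherm hAsq hMherm hMsq ψ hψ hmax v
  by_cases hi0 : (i : ℕ) = 0
  · rw [S11.stab_gen0 A M v i hi0]
    exact key _ _
  · by_cases hiD : (i : ℕ) = t + 2
    · rw [S11.stab_genD A M v i hiD]
      exact key _ _
    · have hlt : (i:ℕ) < t + 3 := i.isLt
      rw [S11.stab_genM A M v i ⟨(i:ℕ) - 1, by omega⟩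
        (show (i:ℕ) - 1 + 1 = (i:ℕ) by omega)]
      exact key _ _
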